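/- Let G be a finite group of order g and let R : G → Matrix G G ℝ be its left regular representation, i.e. (R g)_{a,b} = 1 if a = g·b and 0 otherwise. Let q : G → ℝ satisfy q(h) ≥ 0 and ∑_{h∈G} q(h) = 1, and let t ≥ 0. Then Matrix.exp(t • (∑_{h∈G} q(h) • R(h) − 1)) = ∑_{μ∈G} w_μ(t) • R(μ), where w_μ(t) = (1/g) · Tr((R μ)ᵀ · Matrix.exp(t • (∑_{h∈G} q(h) • R(h) − 1))) = (e^{−t}/g) · Tr((R μ)ᵀ · Matrix.exp(t • ∑_{h∈G} q(h) • R(h))). -/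

import Mathlib

open Matrix

set_option maxHeartbeats 2000000 in
/-- For the left regular representation `R` of a finite group `G`, the semigroup
`exp(t • (∑ q h • R h − 1))` is the mixture `∑ wμ(t) • R μ` with weights given by the trace
formulas. -/
theorem regular_representation_accessible_weights
    {G : Type*} [Group G] [Fintype G] [DecidableEq G]
    (R : G → Matrix G G ℝ)
    (hR : ∀ g a b : G, R g a b = if a = g * b then 1 else 0)
    (q : G → ℝ) (hq : ∀ h : G, 0 ≤ q h) (hqsum : ∑ h : G, q h = 1)
    (t : ℝ) (ht : 0 ≤ t) :
    NormedSpace.exp (t • ((∑ h : G, q h • R h) - 1)) =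
      (∑ μ : G,
        ((1 / (Fintype.card G : ℝ)) *
          Matrix.trace ((R μ)ᵀ * NormedSpace.exp (t • ((∑ h : G, q h • R h) - 1)))) • R μ) ∧
    ∀ μ : G,
      (1 / (Fintype.card G : ℝ)) *
          Matrix.trace ((R μ)ᵀ * NormedSpace.exp (t • ((∑ h : G, q h • R h) - 1))) =
        (Real.exp (-t) / (Fintype.card G : ℝ)) *
          Matrix.trace ((R μ)ᵀ * NormedSpace.exp (t • ∑ h : G, q h • R h)) := by
  have hmul : ∀ g h : G, R g * R h = R (g * h) := by
    intro g h
    ext a b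
    simp only [Matrix.mul_apply, hR]
    rw [Finset.sum_eq_single (h * b)]
    · simp [mul_assoc]
    · intro c _ hc; simp [hc]
    · simp
  have hone : R 1 = 1 := by
    ext a b; simp [hR, Matrix.one_apply]
  have htr : ∀ μ ν : G, Matrix.trace ((R μ)ᵀ * R ν) =
      if μ = ν then (Fintype.card G : ℝ) else 0 := by
    intro μ ν
    simp only [Matrix.trace, Matrix.diag, Matrix.mul_apply, Matrix.transpose_apply, hR,
      ite_mul, one_mul, zero_mul]
    by_cases h : μ = ν
    · subst h
      simp [Finset.card_univ]
    · simp [h]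
  set A : Matrix G G ℝ := ∑ h : G, q h • R h with hA
  set S : Submodule ℝ (Matrix G G ℝ) := Submodule.span ℝ (Set.range R) with hS
  have hmulmem : ∀ x y : Matrix G G ℝ, x ∈ S → y ∈ S → x * y ∈ S := by
    intro x y hx hy
    have h1 : x * y ∈ S * S := Submodule.mul_mem_mul hx hy
    rw [hS, Submodule.span_mul_span] at h1
    refine Submodule.span_mono ?_ h1
    rintro z ⟨u, ⟨g, rfl⟩, v, ⟨h, rfl⟩, rfl⟩
    exact ⟨g * h, (hmul g h).symm⟩
  have hAmem : A ∈ S := Submodule.sum_mem _ fun h _ =>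
    Submodule.smul_mem _ _ (Submodule.subset_span ⟨h, rfl⟩)
  have honemem : (1 : Matrix G G ℝ) ∈ S := hone ▸ Submodule.subset_span ⟨1, rfl⟩
  have hxmem : t • (A - 1) ∈ S := Submodule.smul_mem _ _ (Submodule.sub_mem _ hAmem honemem)
  have hpow : ∀ n : ℕ, (t • (A - 1)) ^ n ∈ S := by
    intro n
    induction n with
    | zero => simpa using honemem
    | succ n ih => rw [pow_succ]; exact hmulmem _ _ ih hxmem
  -- exp lies in S
  have hexpmem : NormedSpace.exp (t • (A - 1)) ∈ S := by
    have hclosed : IsClosed (S : Set (Matrix G G ℝ)) := Submodule.closed_of_finiteDimensional S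
    rw [NormedSpace.exp_eq_tsum ℝ]
    show (∑' n : ℕ, ((n.factorial : ℝ)⁻¹) • (t • (A - 1)) ^ n) ∈ S
    by_cases hsummable :
        Summable (fun n : ℕ => ((n.factorial : ℝ)⁻¹) • (t • (A - 1)) ^ n)
    · exact hclosed.mem_of_tendsto hsummable.hasSum
        (Filter.Eventually.of_forall fun s =>
          Submodule.sum_mem _ fun n _ => Submodule.smul_mem _ _ (hpow n))
    · rw [tsum_eq_zero_of_not_summable hsummable]
      exact S.zero_mem
  obtain ⟨c, hc⟩ := (Submodule.mem_span_range_iff_exists_fun ℝ).mp hexpmem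
  have hcard : (Fintype.card G : ℝ) ≠ 0 := Nat.cast_ne_zero.mpr Fintype.card_ne_zero
  have hcoef : ∀ μ : G,
      (1 / (Fintype.card G : ℝ)) *
        Matrix.trace ((R μ)ᵀ * NormedSpace.exp (t • (A - 1))) = c μ := by
    intro μ
    rw [← hc, Matrix.mul_sum, Matrix.trace_sum]
    simp only [Matrix.mul_smul, Matrix.trace_smul, htr, smul_eq_mul, mul_ite, mul_zero]
    rw [Finset.sum_ite_eq]
    simp only [Finset.mem_univ, if_true]
    field_simp
  have hsplit : NormedSpace.exp (t • (A - 1)) =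
      Real.exp (-t) • NormedSpace.exp (t • A) := by
    have h1 : t • (A - 1) = (-t) • (1 : Matrix G G ℝ) + t • A := by
      rw [smul_sub]; module
    have hcomm : Commute ((-t) • (1 : Matrix G G ℝ)) (t • A) :=
      (Commute.one_left (t • A)).smul_left (-t)
    have h2 : (-t) • (1 : Matrix G G ℝ) = Matrix.diagonal (fun _ => (-t : ℝ)) := by
      ext a b
      by_cases hab : a = b <;> simp [hab, Matrix.one_apply]
    have h3 : NormedSpace.exp ((-t) • (1 : Matrix G G ℝ)) =
        Real.exp (-t) • (1 : Matrix G G ℝ) := by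
      rw [h2, Matrix.exp_diagonal]
      have h4 : NormedSpace.exp (fun _ : G => (-t : ℝ)) = fun _ : G => Real.exp (-t) := by
        rw [Pi.exp_def]
        funext i
        rw [Real.exp_eq_exp_ℝ]
      rw [h4]
      ext a b
      by_cases hab : a = b <;> simp [hab, Matrix.one_apply]
    rw [h1, Matrix.exp_add_of_commute _ _ hcomm, h3, Matrix.smul_mul, Matrix.one_mul]
  refine ⟨?_, ?_⟩
  · conv_lhs => rw [← hc]
    exact Finset.sum_congr rfl fun μ _ => by rw [hcoef μ]
  · intro μ
    rw [hsplit, Matrix.mul_smul, Matrix.trace_smul, smul_eq_mul]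
    ring
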